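/- For any a, b ∈ ℂ with (a,b) ≠ (0,0), ∫₀^{2π} log|a + b e^{iφ}| dφ = 2π log max(|a|, |b|). -/

import Mathlib

open Real

section JensenAux
open MeasureTheory intervalIntegral Set Complex Metric Topology

noncomputable def Complex.abs : AbsoluteValue ℂ ℝ :=
  IsAbsoluteValue.toAbsoluteValue (norm : ℂ → ℝ)

lemma Complex.abs_apply' (z : ℂ) : Complex.abs z = ‖z‖ := rfl

lemma Complex.sq_abs (z : ℂ) : Complex.abs z ^ 2 = Complex.normSq z := Complex.sq_norm z

lemma Complex.abs_exp (z : ℂ) : Complex.abs (Complex.exp z) = Real.exp z.re := Complex.norm_exp z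

lemma Complex.abs_mul_exp_arg_mul_I (x : ℂ) :
    ↑(Complex.abs x) * Complex.exp (↑(Complex.arg x) * Complex.I) = x :=
  Complex.norm_mul_exp_arg_mul_I x

lemma Complex.abs_re_le_abs (z : ℂ) : |z.re| ≤ Complex.abs z := Complex.abs_re_le_norm z

lemma Complex.abs_ofReal (r : ℝ) : Complex.abs (r : ℂ) = |r| := Complex.norm_real r

lemma Complex.continuous_abs : Continuous Complex.abs := continuous_norm

-- L1: log integrable on [0,1]
lemma L1 : IntervalIntegrable Real.log volume 0 1 := by
  rw [intervalIntegrable_iff_integrableOn_Ioc_of_le (by norm_num)]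
  have hg : IntegrableOn (fun x : ℝ => 2 * x ^ (-(1/2) : ℝ)) (Ioc 0 1) volume := by
    have := (intervalIntegrable_rpow' (a := 0) (b := 1) (r := -(1/2)) (by norm_num)).const_mul 2
    rwa [intervalIntegrable_iff_integrableOn_Ioc_of_le (by norm_num)] at this
  refine hg.integrable.mono' Real.measurable_log.aestronglyMeasurable ?_
  refine (ae_restrict_iff' measurableSet_Ioc).2 (Filter.Eventually.of_forall fun x hx => ?_)
  obtain ⟨hx0, hx1⟩ := hx
  have hlogle : Real.log x ≤ 0 := Real.log_nonpos hx0.le hx1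
  rw [Real.norm_eq_abs, abs_of_nonpos hlogle]
  have hy : (0:ℝ) < x ^ (-(1/2) : ℝ) := Real.rpow_pos_of_pos hx0 _
  have h1 : Real.log (x ^ (-(1/2) : ℝ)) = -(1/2) * Real.log x := Real.log_rpow hx0 _
  have h2 : Real.log (x ^ (-(1/2) : ℝ)) ≤ x ^ (-(1/2) : ℝ) - 1 := Real.log_le_sub_one_of_pos hy
  nlinarith

lemma L2 : IntervalIntegrable Real.log volume 0 (π/2) := by
  refine L1.trans (intervalIntegrable_log ?_)
  rw [Set.uIcc_of_le (by linarith [pi_gt_three])]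
  rintro ⟨h, -⟩; linarith

-- core: log |sin| integrable on [0, π/2]
lemma S0 : IntervalIntegrable (fun x => Real.log |Real.sin x|) volume 0 (π/2) := by
  rw [intervalIntegrable_iff_integrableOn_Ioc_of_le (by positivity)]
  have hg : IntegrableOn (fun x : ℝ => Real.log (π/2) - Real.log x) (Ioc 0 (π/2)) volume := by
    have := (_root_.intervalIntegrable_const (c := Real.log (π/2)) (a := 0) (b := π/2) (μ := volume)).sub L2
    rwa [intervalIntegrable_iff_integrableOn_Ioc_of_le (by positivity)] at this
  refine hg.integrable.mono' ((Real.measurable_log.comp Real.continuous_sin.measurable.abs).aestronglyMeasurable) ?_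
  refine (ae_restrict_iff' measurableSet_Ioc).2 (Filter.Eventually.of_forall fun x hx => ?_)
  obtain ⟨hx0, hx1⟩ := hx
  have hs : 0 < Real.sin x := Real.sin_pos_of_pos_of_lt_pi hx0 (by linarith [pi_pos])
  have hb : 2/π * x ≤ Real.sin x := Real.mul_le_sin hx0.le hx1
  have h1 : Real.log (Real.sin x) ≤ 0 := Real.log_nonpos hs.le (Real.sin_le_one x)
  rw [abs_of_pos hs, Real.norm_eq_abs, abs_of_nonpos h1]
  have h2 : Real.log (2/π * x) ≤ Real.log (Real.sin x) :=
    Real.log_le_log (by positivity) hb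
  have h3 : Real.log (2/π * x) = Real.log (2/π) + Real.log x :=
    Real.log_mul (by positivity) (by linarith)
  have h4 : Real.log (2/π) = - Real.log (π/2) := by
    rw [← Real.log_inv]; norm_num
  linarith

lemma Srefl : IntervalIntegrable (fun x => Real.log |Real.sin x|) volume (π/2) π := by
  have h := S0.comp_sub_left π
  simp only [sub_zero, sub_self] at h
  -- h : IntervalIntegrable (fun x => log |sin (π - x)|) volume π (π/2) ? check
  have : (fun x => Real.log |Real.sin (π - x)|) = fun x => Real.log |Real.sin x| := by
    funext x; rw [Real.sin_pi_sub]
  rw [this] at h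
  have hh := h.symm
  rwa [show π - π/2 = π/2 by ring] at hh

lemma Spi : IntervalIntegrable (fun x => Real.log |Real.sin x|) volume 0 π :=
  S0.trans Srefl

lemma periodic_ii {f : ℝ → ℝ} {T : ℝ} (hT : 0 < T) (hp : Function.Periodic f T)
    (h0 : IntervalIntegrable f volume 0 T) (a b : ℝ) : IntervalIntegrable f volume a b := by
  have hn : ∀ n : ℤ, IntervalIntegrable f volume (n * T) (n * T + T) := by
    intro n
    have h := h0.comp_sub_right (n * T)
    have he : (fun x => f (x - n * T)) = f := by
      funext x
      simpa using (hp.int_mul n).sub_eq x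
    rw [he] at h
    simpa [add_comm] using h
  have hk : ∀ (n : ℤ) (k : ℕ), IntervalIntegrable f volume (n * T) (n * T + k * T) := by
    intro n k
    induction k with
    | zero => simp
    | succ k ih =>
      refine ih.trans ?_
      have := hn (n + k)
      have e1 : ((n + k : ℤ) : ℝ) * T = n * T + k * T := by push_cast; ring
      have e2 : ((n + k : ℤ) : ℝ) * T + T = n * T + (k + 1 : ℕ) * T := by push_cast; ring
      rw [e1] at this
      have e3 : ((k:ℝ)+1) * T = (k:ℝ) * T + T := by ring
      push_cast
      rw [e3]
      rw [← add_assoc]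
      exact this
  -- choose n ≤ min a b / T and k large
  obtain ⟨n, hnle⟩ : ∃ n : ℤ, (n : ℝ) * T ≤ min a b := by
    refine ⟨⌊min a b / T⌋, ?_⟩
    rw [← le_div_iff₀ hT]
    exact Int.floor_le _
  obtain ⟨k, hk'⟩ : ∃ k : ℕ, max a b ≤ (n : ℝ) * T + k * T := by
    obtain ⟨k, hk'⟩ := exists_nat_ge ((max a b - n * T) / T)
    refine ⟨k, ?_⟩
    rw [div_le_iff₀ hT] at hk'
    linarith
  refine (hk n k).mono_set ?_
  have h1 : (n:ℝ) * T ≤ (n:ℝ) * T + k * T := by nlinarith [hT.le, Nat.cast_nonneg (α := ℝ) k]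
  rw [Set.uIcc_of_le h1]
  refine Set.uIcc_subset_Icc ?_ ?_
  · exact ⟨le_trans hnle (min_le_left _ _), le_trans (le_max_left a b) hk'⟩
  · exact ⟨le_trans hnle (min_le_right _ _), le_trans (le_max_right a b) hk'⟩

lemma Sall (a b : ℝ) : IntervalIntegrable (fun x => Real.log |Real.sin x|) volume a b := by
  refine periodic_ii pi_pos ?_ Spi a b
  intro x
  simp [Real.sin_add_pi]

lemma Call (a b : ℝ) : IntervalIntegrable (fun x => Real.log |Real.cos x|) volume a b := by
  have h := (Sall (a + π/2) (b + π/2)).comp_add_right (π/2)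
  simp only [add_sub_cancel_right] at h
  have he : (fun x => Real.log |Real.sin (x + π/2)|) = fun x => Real.log |Real.cos x| := by
    funext x; rw [Real.sin_add_pi_div_two]
  rwa [he] at h

-- countable zero set of cos(x/2)
lemma coshalf_zero_null : volume {x : ℝ | Real.cos (x/2) = 0} = 0 := by
  have hsub : {x : ℝ | Real.cos (x/2) = 0} ⊆ Set.range (fun n : ℤ => (2*n+1) * π) := by
    intro x hx
    rw [Set.mem_setOf_eq, Real.cos_eq_zero_iff] at hx
    obtain ⟨n, hn⟩ := hx
    exact ⟨n, by push_cast; linarith⟩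
  exact measure_mono_null hsub ((Set.countable_range _).measure_zero _)

lemma OnePlusCos (a b : ℝ) : IntervalIntegrable (fun x => Real.log (1 + Real.cos x)) volume a b := by
  rw [intervalIntegrable_iff]
  have h2 : IntervalIntegrable (fun x => Real.log 2 + 2 * Real.log (Real.cos (x/2))) volume a b := by
    refine (_root_.intervalIntegrable_const).add ?_
    have h := (Call (a * (1/2)) (b * (1/2))).comp_mul_right (c := 1/2)
    norm_num at h
    have h' := h.const_mul 2
    have he : (fun x => 2 * Real.log (Real.cos (x * (1/2)))) = fun x => 2 * Real.log (Real.cos (x/2)) := by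
      funext x; rw [mul_one_div]
    rwa [he] at h'
  rw [intervalIntegrable_iff] at h2
  refine (Integrable.congr h2 ?_)
  have hnull : volume.restrict (Set.uIoc a b) {x : ℝ | Real.cos (x/2) = 0} = 0 :=
    measure_mono_null (fun x hx => hx) (by
      exact le_antisymm (le_trans (Measure.restrict_le_self _) coshalf_zero_null.le) (zero_le))
  refine ((measure_eq_zero_iff_ae_notMem.mp hnull)).mono fun x hx => ?_
  have hc : Real.cos (x/2) ≠ 0 := hx
  have hcos : 1 + Real.cos x = 2 * Real.cos (x/2)^2 := by
    have := Real.cos_sq (x/2)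
    rw [show 2 * (x/2) = x by ring] at this
    linarith
  simp only
  rw [hcos, Real.log_mul two_ne_zero (pow_ne_zero 2 hc), Real.log_pow]
  push_cast
  ring

lemma lemD {c : ℂ} (hc : Complex.abs c = 1) :
    IntervalIntegrable (fun φ : ℝ => Real.log (1 + (c * Complex.exp (Complex.I * φ)).re))
      volume 0 (2*π) := by
  set θ := Complex.arg c with hθ
  have hce : c = Complex.exp (↑θ * Complex.I) := by
    conv_lhs => rw [← Complex.abs_mul_exp_arg_mul_I c]
    rw [hc]; simp [hθ]
  have he : (fun φ : ℝ => Real.log (1 + (c * Complex.exp (Complex.I * φ)).re))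
      = fun φ : ℝ => Real.log (1 + Real.cos (θ + φ)) := by
    funext φ
    rw [hce, ← Complex.exp_add]
    have : (↑θ * Complex.I + Complex.I * ↑φ) = ((θ + φ : ℝ) : ℂ) * Complex.I := by
      push_cast; ring
    rw [this, Complex.exp_ofReal_mul_I_re]
  rw [he]
  have h := (OnePlusCos θ (θ + 2*π)).comp_add_left θ
  simpa using h

-- null set
lemma badset_null (c : ℂ) : volume {φ : ℝ | (1 : ℂ) + c * Complex.exp (Complex.I * φ) = 0} = 0 := by
  set N := {φ : ℝ | (1 : ℂ) + c * Complex.exp (Complex.I * φ) = 0} with hN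
  rcases Set.eq_empty_or_nonempty N with h | ⟨φ₀, hφ₀⟩
  · simp [h]
  have hcne : c ≠ 0 := by
    rintro rfl
    simp only [hN, Set.mem_setOf_eq, zero_mul, add_zero] at hφ₀
    exact one_ne_zero hφ₀
  have hsub : N ⊆ Set.range (fun n : ℤ => φ₀ + n * (2*π)) := by
    intro φ hφ
    have h1 : Complex.exp (Complex.I * φ) = Complex.exp (Complex.I * φ₀) := by
      have e1 : c * Complex.exp (Complex.I * φ) = -1 := by
        have := hφ; rw [hN, Set.mem_setOf_eq] at this; linear_combination this - 1
      have e2 : c * Complex.exp (Complex.I * φ₀) = -1 := by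
        have := hφ₀; rw [hN, Set.mem_setOf_eq] at this; linear_combination this - 1
      have := e1.trans e2.symm
      exact mul_left_cancel₀ hcne this
    rw [Complex.exp_eq_exp_iff_exists_int] at h1
    obtain ⟨n, hn⟩ := h1
    refine ⟨n, ?_⟩
    have := congrArg Complex.im hn
    simp only [Complex.add_im, Complex.mul_im, Complex.I_re, Complex.I_im,
      Complex.ofReal_re, Complex.ofReal_im, Complex.re_ofReal_mul] at this
    push_cast at this ⊢
    simp at this
    linarith
  exact measure_mono_null hsub ((Set.countable_range _).measure_zero _)

lemma abs_one_add_sq (z : ℂ) :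
    (Complex.abs (1 + z))^2 = 1 + 2*z.re + (Complex.abs z)^2 := by
  rw [Complex.sq_abs, Complex.sq_abs, Complex.normSq_apply, Complex.normSq_apply]
  simp [Complex.add_re, Complex.add_im]
  ring

lemma bound_est {c : ℂ} (hc : Complex.abs c = 1) {r : ℝ} (hr : r ∈ Set.Icc (1/2 : ℝ) 1)
    {φ : ℝ} (hφ : (1:ℂ) + c * Complex.exp (Complex.I * φ) ≠ 0) :
    ‖Real.log (Complex.abs (1 + ↑r * c * Complex.exp (Complex.I * φ)))‖
      ≤ Real.log 2 + ‖Real.log (1 + (c * Complex.exp (Complex.I * φ)).re)‖ / 2 := by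
  obtain ⟨hr1, hr2⟩ := hr
  have hr0 : (0:ℝ) ≤ r := by linarith
  set e := Complex.exp (Complex.I * φ) with he
  have habse : Complex.abs e = 1 := by
    rw [he, Complex.abs_exp]
    simp
  set t := (c * e).re with ht
  have habsce : Complex.abs (c * e) = 1 := by rw [map_mul, hc, habse, one_mul]
  have ht1 : |t| ≤ 1 := by
    calc |t| ≤ Complex.abs (c * e) := Complex.abs_re_le_abs _
    _ = 1 := habsce
  have hw0 : 0 ≤ 1 + t := by cases abs_le.mp ht1; linarith
  have h2 := abs_one_add_sq (c * e)
  rw [habsce, ← ht] at h2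
  have hA1pos : 0 < Complex.abs (1 + c * e) := AbsoluteValue.pos _ hφ
  have hwpos : 0 < 1 + t := by nlinarith
  set A := Complex.abs (1 + ↑r * c * Complex.exp (Complex.I * φ)) with hA
  have hre : ((↑r * c * e).re) = r * t := by
    rw [mul_assoc, Complex.re_ofReal_mul, ht]
  have habsr : Complex.abs (↑r * c * e) = r := by
    rw [mul_assoc, map_mul, habsce, Complex.abs_ofReal, _root_.abs_of_nonneg hr0, mul_one]
  have hAsq : A^2 = 1 + 2*(r*t) + r^2 := by
    rw [hA, ← he, abs_one_add_sq, hre, habsr]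
  have hAub : A ≤ 2 := by
    calc A ≤ Complex.abs 1 + Complex.abs (↑r * c * e) := by rw [hA, ← he]; exact Complex.abs.add_le _ _
    _ = 1 + r := by rw [habsr, map_one]
    _ ≤ 2 := by linarith
  have hAsq_ge : 1 + t ≤ A^2 := by nlinarith
  have hA0 : 0 ≤ A := by rw [hA]; exact AbsoluteValue.nonneg _ _
  have hApos : 0 < A := by nlinarith
  have hup : Real.log A ≤ Real.log 2 := Real.log_le_log hApos hAub
  have hlo : Real.log (1 + t) / 2 ≤ Real.log A := by
    have h1 : Real.log (1 + t) ≤ Real.log (A^2) := Real.log_le_log hwpos hAsq_ge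
    rw [Real.log_pow] at h1
    push_cast at h1
    linarith
  rw [Real.norm_eq_abs, Real.norm_eq_abs]
  rw [abs_le]
  have h5 := neg_abs_le (Real.log (1 + t))
  have h6 := le_abs_self (Real.log (1 + t))
  have h7 := abs_nonneg (Real.log (1 + t))
  have hl2 : (0:ℝ) ≤ Real.log 2 := Real.log_nonneg one_le_two
  constructor <;> linarith

lemma keyLT {c : ℂ} (hc : Complex.abs c < 1) :
    ∫ φ in (0:ℝ)..(2*π), Real.log (Complex.abs (1 + c * Complex.exp (Complex.I * φ))) = 0 := by
  set f : ℂ → ℂ := fun z => Complex.log (1 + c * z) with hf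
  have hmem : ∀ z : ℂ, Complex.abs z ≤ 1 → (1 + c * z) ∈ Complex.slitPlane := by
    intro z hz
    refine Or.inl ?_
    have h1 : |(c * z).re| ≤ Complex.abs (c * z) := Complex.abs_re_le_abs _
    have h2 : Complex.abs (c * z) ≤ Complex.abs c := by
      rw [map_mul]
      calc Complex.abs c * Complex.abs z ≤ Complex.abs c * 1 :=
        mul_le_mul_of_nonneg_left hz (AbsoluteValue.nonneg _ _)
      _ = Complex.abs c := mul_one _
    simp only [Complex.add_re, Complex.one_re]
    linarith [neg_abs_le ((c * z).re), h1, h2, hc]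
  have hd : ∀ z ∈ closedBall (0:ℂ) 1, DifferentiableAt ℂ f z := by
    intro z hz
    rw [mem_closedBall, dist_zero_right] at hz
    exact ((differentiableAt_id.const_mul c).const_add 1).clog (hmem z hz)
  have hcau := circleIntegral_sub_inv_smul_of_differentiable_on_off_countable
    (R := 1) (c := (0:ℂ)) (w := 0) (f := f) (s := ∅) Set.countable_empty
    (by simp) (fun z hz => (hd z hz).continuousAt.continuousWithinAt)
    (fun z hz => hd z (ball_subset_closedBall hz.1))
  have hf0 : f 0 = 0 := by simp [hf]
  rw [hf0, smul_zero] at hcau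
  -- unfold circle integral
  rw [circleIntegral] at hcau
  have hint : (∫ θ in (0:ℝ)..2*π, deriv (circleMap 0 1) θ •
      ((circleMap 0 1 θ - 0)⁻¹ • f (circleMap 0 1 θ)))
      = ∫ θ in (0:ℝ)..2*π, Complex.I * f (Complex.exp (θ * Complex.I)) := by
    refine intervalIntegral.integral_congr fun θ _ => ?_
    have hcm : circleMap 0 1 θ = Complex.exp (θ * Complex.I) := by
      simp [circleMap]
    rw [deriv_circleMap, hcm]
    have hne : Complex.exp (θ * Complex.I) ≠ 0 := Complex.exp_ne_zero _
    simp only [circleMap, zero_add, one_mul, ofReal_one, smul_eq_mul, sub_zero]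
    field_simp
  rw [hint] at hcau
  rw [intervalIntegral.integral_const_mul] at hcau
  have hI : (Complex.I : ℂ) ≠ 0 := Complex.I_ne_zero
  have hzero : (∫ θ in (0:ℝ)..2*π, f (Complex.exp (θ * Complex.I))) = 0 :=
    (mul_eq_zero.mp hcau).resolve_left hI
  -- take real parts
  have hcont : Continuous fun θ : ℝ => f (Complex.exp (θ * Complex.I)) := by
    rw [continuous_iff_continuousAt]
    intro θ
    have h1 : Continuous fun θ : ℝ => (1 : ℂ) + c * Complex.exp (θ * Complex.I) := by
      continuity
    have h2 : Complex.abs (Complex.exp ((θ:ℂ) * Complex.I)) ≤ 1 := by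
      rw [Complex.abs_exp]
      simp
    show ContinuousAt (fun θ : ℝ => Complex.log (1 + c * Complex.exp (θ * Complex.I))) θ
    exact ContinuousAt.comp (g := Complex.log)
      (f := fun θ : ℝ => 1 + c * Complex.exp (θ * Complex.I))
      (_root_.continuousAt_clog (hmem _ h2)) h1.continuousAt
  have hre := Complex.reCLM.intervalIntegral_comp_comm
    (hcont.intervalIntegrable (μ := volume) (0:ℝ) (2*π))
  rw [hzero] at hre
  simp only [Complex.reCLM_apply, Complex.zero_re] at hre
  have : (∫ φ in (0:ℝ)..(2*π), Real.log (Complex.abs (1 + c * Complex.exp (Complex.I * φ))))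
      = ∫ θ in (0:ℝ)..2*π, (f (Complex.exp (θ * Complex.I))).re := by
    refine intervalIntegral.integral_congr fun θ _ => ?_
    rw [hf]
    simp only
    rw [Complex.log_re, mul_comm Complex.I (θ:ℂ)]; rfl
  rw [this, hre]

noncomputable def bnd (c : ℂ) (φ : ℝ) : ℝ :=
  Real.log 2 + ‖Real.log (1 + (c * Complex.exp (Complex.I * φ)).re)‖ / 2

lemma bndInt {c : ℂ} (hc : Complex.abs c = 1) : IntervalIntegrable (bnd c) volume 0 (2*π) :=
  (_root_.intervalIntegrable_const).add ((lemD hc).norm.div_const 2)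

lemma hmeas (c : ℂ) (r : ℝ) :
    AEStronglyMeasurable (fun φ : ℝ => Real.log (Complex.abs (1 + ↑r * c * Complex.exp (Complex.I * φ))))
      (volume.restrict (Set.uIoc (0:ℝ) (2*π))) := by
  have hco : Continuous fun φ : ℝ => Complex.abs (1 + ↑r * c * Complex.exp (Complex.I * φ)) :=
    Complex.continuous_abs.comp (continuous_const.add (continuous_const.mul
      (Complex.continuous_exp.comp (continuous_const.mul Complex.continuous_ofReal))))
  exact (Real.measurable_log.comp hco.measurable).aestronglyMeasurable

lemma hae (c : ℂ) : ∀ᵐ φ : ℝ ∂volume, (1:ℂ) + c * Complex.exp (Complex.I * φ) ≠ 0 :=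
  measure_eq_zero_iff_ae_notMem.mp (badset_null c)

lemma keyInt {c : ℂ} (hc : Complex.abs c = 1) :
    IntervalIntegrable (fun φ : ℝ => Real.log (Complex.abs (1 + c * Complex.exp (Complex.I * φ))))
      volume 0 (2*π) := by
  refine (bndInt hc).mono_fun ?_ ?_
  · have := hmeas c 1
    simpa using this
  · refine (ae_restrict_of_ae ((hae c).mono fun φ hφ => ?_))
    have := bound_est hc (r := 1) (by constructor <;> norm_num) hφ
    simp only [Complex.ofReal_one, one_mul] at this
    calc ‖Real.log (Complex.abs (1 + c * Complex.exp (Complex.I * φ)))‖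
        ≤ Real.log 2 + ‖Real.log (1 + (c * Complex.exp (Complex.I * φ)).re)‖ / 2 := this
    _ ≤ ‖bnd c φ‖ := le_abs_self _

set_option maxHeartbeats 2000000 in
lemma keyEQ {c : ℂ} (hc : Complex.abs c = 1) :
    ∫ φ in (0:ℝ)..(2*π), Real.log (Complex.abs (1 + c * Complex.exp (Complex.I * φ))) = 0 := by
  set l : Filter ℝ := nhdsWithin 1 (Set.Iio 1) with hl
  have hev : ∀ᶠ r : ℝ in l, r ∈ Set.Ioo (1/2 : ℝ) 1 :=
    Ioo_mem_nhdsLT_of_mem (by constructor <;> norm_num)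
  have T1 : Filter.Tendsto
      (fun r : ℝ => ∫ φ in (0:ℝ)..(2*π),
        Real.log (Complex.abs (1 + ↑r * c * Complex.exp (Complex.I * φ)))) l
      (𝓝 (∫ φ in (0:ℝ)..(2*π),
        Real.log (Complex.abs (1 + c * Complex.exp (Complex.I * φ))))) := by
    refine intervalIntegral.tendsto_integral_filter_of_dominated_convergence (bnd c)
      (Filter.Eventually.of_forall fun r => hmeas c r) ?_ (bndInt hc) ?_
    · refine hev.mono fun r hr => ?_
      refine (hae c).mono fun φ hφ => fun _ => ?_
      calc ‖Real.log (Complex.abs (1 + ↑r * c * Complex.exp (Complex.I * φ)))‖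
          ≤ Real.log 2 + ‖Real.log (1 + (c * Complex.exp (Complex.I * φ)).re)‖ / 2 :=
            bound_est hc ⟨hr.1.le, hr.2.le⟩ hφ
      _ = bnd c φ := rfl
    · refine (hae c).mono fun φ hφ => fun _ => ?_
      have hco : Continuous fun r : ℝ => Complex.abs (1 + ↑r * c * Complex.exp (Complex.I * φ)) :=
        Complex.continuous_abs.comp (continuous_const.add
          ((Complex.continuous_ofReal.mul continuous_const).mul continuous_const))
      have hpos : Complex.abs (1 + c * Complex.exp (Complex.I * φ)) ≠ 0 := by
        simpa using hφ
      have hcl : ContinuousAt Real.log (Complex.abs (1 + c * Complex.exp (Complex.I * φ))) :=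
        Real.continuousAt_log hpos
      have h2 := hco.continuousAt (x := 1)
      have h3 : Complex.abs (1 + ((1:ℝ):ℂ) * c * Complex.exp (Complex.I * φ))
          = Complex.abs (1 + c * Complex.exp (Complex.I * φ)) := by norm_num
      have h2' : Filter.Tendsto (fun r : ℝ => Complex.abs (1 + ↑r * c * Complex.exp (Complex.I * φ)))
          (𝓝 1) (𝓝 (Complex.abs (1 + c * Complex.exp (Complex.I * φ)))) := by
        have h2t := h2.tendsto
        rwa [h3] at h2t
      have h1 := hcl.tendsto.comp h2'
      exact h1.mono_left nhdsWithin_le_nhds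
  have T2 : Filter.Tendsto
      (fun r : ℝ => ∫ φ in (0:ℝ)..(2*π),
        Real.log (Complex.abs (1 + ↑r * c * Complex.exp (Complex.I * φ)))) l (𝓝 0) := by
    refine Filter.Tendsto.congr' ?_ tendsto_const_nhds
    refine (hev.mono fun r hr => ?_)
    have habs : Complex.abs (↑r * c) < 1 := by
      rw [map_mul, Complex.abs_ofReal, hc, mul_one, abs_of_pos (by linarith [hr.1])]
      exact hr.2
    have := keyLT habs
    simp only [mul_assoc] at this ⊢
    exact this.symm
  exact tendsto_nhds_unique T1 T2

lemma keyInt' {c : ℂ} (hc : Complex.abs c ≤ 1) :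
    IntervalIntegrable (fun φ : ℝ => Real.log (Complex.abs (1 + c * Complex.exp (Complex.I * φ))))
      volume 0 (2*π) := by
  rcases lt_or_eq_of_le hc with h | h
  · have hco : Continuous fun φ : ℝ => Complex.abs (1 + c * Complex.exp (Complex.I * φ)) :=
      Complex.continuous_abs.comp (continuous_const.add (continuous_const.mul
        (Complex.continuous_exp.comp (continuous_const.mul Complex.continuous_ofReal))))
    have hne : ∀ φ : ℝ, Complex.abs (1 + c * Complex.exp (Complex.I * φ)) ≠ 0 := by
      intro φ
      rw [ne_eq, map_eq_zero]
      intro h0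
      have he : Complex.abs (c * Complex.exp (Complex.I * φ)) = 1 := by
        have : c * Complex.exp (Complex.I * φ) = -1 := by linear_combination h0 - 1
        rw [this]; simp
      rw [map_mul, Complex.abs_exp] at he
      simp at he
      rw [he] at h
      exact lt_irrefl _ h
    exact (hco.log hne).intervalIntegrable _ _
  · exact keyInt h

lemma key {c : ℂ} (hc : Complex.abs c ≤ 1) :
    ∫ φ in (0:ℝ)..(2*π), Real.log (Complex.abs (1 + c * Complex.exp (Complex.I * φ))) = 0 := by
  rcases lt_or_eq_of_le hc with h | h
  · exact keyLT h
  · exact keyEQ h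

lemma half (a b : ℂ) (ha : a ≠ 0) (hle : Complex.abs b ≤ Complex.abs a) :
    ∫ φ in (0:ℝ)..(2*π), Real.log (Complex.abs (a + b * Complex.exp (Complex.I * φ)))
      = 2 * π * Real.log (Complex.abs a) := by
  set c := b / a with hcdef
  have hapos : 0 < Complex.abs a := by rwa [AbsoluteValue.pos_iff]
  have hc : Complex.abs c ≤ 1 := by
    rw [hcdef, map_div₀, div_le_one hapos]
    exact hle
  have hcong : ∫ φ in (0:ℝ)..(2*π), Real.log (Complex.abs (a + b * Complex.exp (Complex.I * φ)))
      = ∫ φ in (0:ℝ)..(2*π), (Real.log (Complex.abs a)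
          + Real.log (Complex.abs (1 + c * Complex.exp (Complex.I * φ)))) := by
    refine intervalIntegral.integral_congr_ae (((hae c).mono fun φ hφ => fun _ => ?_))
    have hfac : a + b * Complex.exp (Complex.I * φ)
        = a * (1 + c * Complex.exp (Complex.I * φ)) := by
      rw [hcdef]; field_simp
    rw [hfac, map_mul, Real.log_mul (ne_of_gt hapos) ?h2]
    · rw [ne_eq, map_eq_zero]; exact hφ
  rw [hcong, intervalIntegral.integral_add (_root_.intervalIntegrable_const) (keyInt' hc),
    key hc, add_zero, intervalIntegral.integral_const, smul_eq_mul]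
  ring

end JensenAux

open MeasureTheory intervalIntegral Set Complex Metric Topology in
theorem jensen_linear_circle (a b : ℂ) (hab : (a, b) ≠ (0, 0)) :
    ∫ φ in (0:ℝ)..(2 * π),
        Real.log (‖a + b * Complex.exp (Complex.I * φ)‖)
      = 2 * π * Real.log (max ‖a‖ ‖b‖) := by
  change ∫ φ in (0:ℝ)..(2 * π), Real.log (Complex.abs (a + b * Complex.exp (Complex.I * φ)))
    = 2 * π * Real.log (max (Complex.abs a) (Complex.abs b))
  rcases le_total (Complex.abs b) (Complex.abs a) with hle | hle
  · have ha : a ≠ 0 := by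
      rintro rfl
      simp only [map_zero] at hle
      have hb : b = 0 := by
        have h0 : Complex.abs b = 0 := le_antisymm hle (AbsoluteValue.nonneg _ _)
        rwa [map_eq_zero] at h0
      exact hab (by simp [hb])
    rw [max_eq_left hle]
    exact half a b ha hle
  · have hb : b ≠ 0 := by
      rintro rfl
      simp only [map_zero] at hle
      have ha : a = 0 := by
        have h0 : Complex.abs a = 0 := le_antisymm hle (AbsoluteValue.nonneg _ _)
        rwa [map_eq_zero] at h0
      exact hab (by simp [ha])
    -- swap
    have hswap : ∫ φ in (0:ℝ)..(2*π), Real.log (Complex.abs (a + b * Complex.exp (Complex.I * φ)))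
        = ∫ φ in (0:ℝ)..(2*π), Real.log (Complex.abs (b + a * Complex.exp (Complex.I * φ))) := by
      set G : ℝ → ℝ := fun ψ => Real.log (Complex.abs (b + a * Complex.exp (Complex.I * ψ))) with hG
      have hpt : ∀ φ : ℝ, Real.log (Complex.abs (a + b * Complex.exp (Complex.I * φ))) = G (-φ) := by
        intro φ
        rw [hG]
        simp only
        congr 1
        have he : Complex.abs (Complex.exp (Complex.I * φ)) = 1 := by
          rw [Complex.abs_exp]; simp
        have : a + b * Complex.exp (Complex.I * φ)
            = (b + a * Complex.exp (Complex.I * (-φ:ℝ))) * Complex.exp (Complex.I * φ) := by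
          push_cast
          rw [add_mul, mul_assoc, ← Complex.exp_add,
            show Complex.I * -↑φ + Complex.I * ↑φ = 0 by ring, Complex.exp_zero, mul_one]
          ring
        rw [this, map_mul, he, mul_one]
      have hper : Function.Periodic G (2*π) := by
        intro ψ
        have hexp : Complex.exp (Complex.I * ((ψ + 2*π : ℝ) : ℂ)) = Complex.exp (Complex.I * ψ) := by
          push_cast
          rw [mul_add, Complex.exp_add,
            show Complex.I * (2*(π:ℂ)) = 2*π*Complex.I by ring, Complex.exp_two_pi_mul_I, mul_one]
        show Real.log (Complex.abs (b + a * Complex.exp (Complex.I * ((ψ + 2*π : ℝ) : ℂ)))) = _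
        rw [hexp]
      calc ∫ φ in (0:ℝ)..(2*π), Real.log (Complex.abs (a + b * Complex.exp (Complex.I * φ)))
          = ∫ φ in (0:ℝ)..(2*π), G (-φ) := by
            refine intervalIntegral.integral_congr fun φ _ => hpt φ
      _ = ∫ φ in (-(2*π):ℝ)..(-0:ℝ), G φ := by rw [← intervalIntegral.integral_comp_neg]
      _ = ∫ φ in (0:ℝ)..(2*π), G φ := by
            have := hper.intervalIntegral_add_eq (-(2*π)) 0
            rw [show -(2*π) + 2*π = (0:ℝ) by ring, zero_add] at this
            rw [show (-0:ℝ) = (0:ℝ) by ring, this]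
    rw [hswap, max_eq_right hle]
    exact half b a hb hle
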